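/- Let X = {z ∈ ℂ³ : 1 + z₁z₂z₃ ≠ 0} and f(z) = (log |1 + z₁z₂z₃|, |z₁|² − |z₂|², |z₁|² − |z₃|²). For every p ∈ X at which the Fréchet derivative Df_p : ℂ³ → ℝ³ is surjective, the kernel of Df_p is a 3-dimensional ℝ-linear subspace of ℂ³ ≅ ℝ⁶ on which the standard symplectic form ω of ℂ³ vanishes identically. In other words, the regular fibres of f are Lagrangian. -/

import Mathlib

/-- The complement of `1 + z₁z₂z₃ = 0` in `ℂ³`. -/
def X9 : Set (ℂ × ℂ × ℂ) := {z | 1 + z.1 * z.2.1 * z.2.2 ≠ 0}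

/-- The positive fibration
`f(z) = (log |1 + z₁z₂z₃|, |z₁|² − |z₂|², |z₁|² − |z₃|²)`. -/
noncomputable def f9 (z : ℂ × ℂ × ℂ) : ℝ × ℝ × ℝ :=
  (Real.log (‖1 + z.1 * z.2.1 * z.2.2‖),
    ‖z.1‖ ^ 2 - ‖z.2.1‖ ^ 2,
    ‖z.1‖ ^ 2 - ‖z.2.2‖ ^ 2)

/-- The standard symplectic form on `ℂ³`: `ω(u,v) = ∑ⱼ Im(conj uⱼ · vⱼ)`. -/
def omega3 (u v : ℂ × ℂ × ℂ) : ℝ :=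
  ((starRingEnd ℂ) u.1 * v.1).im + ((starRingEnd ℂ) u.2.1 * v.2.1).im +
    ((starRingEnd ℂ) u.2.2 * v.2.2).im


-- coordinates form of omega3
lemma omega3_coord (u v : ℂ × ℂ × ℂ) :
    omega3 u v = (u.1.re * v.1.im - u.1.im * v.1.re) +
      (u.2.1.re * v.2.1.im - u.2.1.im * v.2.1.re) +
      (u.2.2.re * v.2.2.im - u.2.2.im * v.2.2.re) := by
  simp [omega3, Complex.mul_im]
  ring

lemma omega3_add_left (u u' v : ℂ × ℂ × ℂ) :
    omega3 (u + u') v = omega3 u v + omega3 u' v := by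
  simp [omega3_coord, Prod.fst_add, Prod.snd_add, Complex.add_re, Complex.add_im]
  ring

lemma omega3_smul_left (r : ℝ) (u v : ℂ × ℂ × ℂ) :
    omega3 (r • u) v = r * omega3 u v := by
  simp [omega3_coord, Prod.smul_fst, Prod.smul_snd, Complex.smul_re, Complex.smul_im]
  ring

lemma f9_eq : f9 = (fun z : ℂ × ℂ × ℂ =>
    ((2:ℝ)⁻¹ * Real.log ((1 + z.1 * z.2.1 * z.2.2).re * (1 + z.1 * z.2.1 * z.2.2).re
        + (1 + z.1 * z.2.1 * z.2.2).im * (1 + z.1 * z.2.1 * z.2.2).im),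
     (z.1.re * z.1.re + z.1.im * z.1.im) - (z.2.1.re * z.2.1.re + z.2.1.im * z.2.1.im),
     (z.1.re * z.1.re + z.1.im * z.1.im) - (z.2.2.re * z.2.2.re + z.2.2.im * z.2.2.im))) := by
  funext z
  have habs : ∀ w : ℂ, (‖w‖) ^ 2 = w.re * w.re + w.im * w.im := by
    intro w
    rw [Complex.sq_norm, Complex.normSq_apply]
  have hlog : ∀ w : ℂ, Real.log (‖w‖) =
      (2:ℝ)⁻¹ * Real.log (w.re * w.re + w.im * w.im) := by
    intro w
    rw [← habs, Real.log_pow]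
    push_cast
    ring
  simp only [f9, hlog, habs]

set_option maxHeartbeats 2000000 in
/-- The regular fibres of the positive fibration are Lagrangian: at every `p ∈ X9`
where `Df_p` is surjective, its kernel is 3-dimensional and `ω` vanishes on it. -/
theorem stmt11 :
    ∀ p ∈ X9, Function.Surjective (fderiv ℝ f9 p) →
      Module.finrank ℝ ↥(LinearMap.ker (fderiv ℝ f9 p : ℂ × ℂ × ℂ →ₗ[ℝ] ℝ × ℝ × ℝ)) = 3 ∧
      ∀ u ∈ LinearMap.ker (fderiv ℝ f9 p : ℂ × ℂ × ℂ →ₗ[ℝ] ℝ × ℝ × ℝ), ∀ v ∈ LinearMap.ker (fderiv ℝ f9 p : ℂ × ℂ × ℂ →ₗ[ℝ] ℝ × ℝ × ℝ),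
        omega3 u v = 0 := by
  intro p hp hsurj
  rw [X9, Set.mem_setOf_eq] at hp
  rw [f9_eq] at hsurj ⊢
  -- the derivative
  have hg : HasFDerivAt (𝕜 := ℝ) (fun z : ℂ × ℂ × ℂ => 1 + z.1 * z.2.1 * z.2.2) _ p :=
    (((hasFDerivAt_fst.mul (hasFDerivAt_fst.comp p hasFDerivAt_snd)).mul
      (hasFDerivAt_snd.comp p hasFDerivAt_snd)).const_add 1)
  have hre := Complex.reCLM.hasFDerivAt.comp p hg
  have him := Complex.imCLM.hasFDerivAt.comp p hg
  have hns : HasFDerivAt (𝕜 := ℝ) (fun z : ℂ × ℂ × ℂ =>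
      (1 + z.1 * z.2.1 * z.2.2).re * (1 + z.1 * z.2.1 * z.2.2).re
      + (1 + z.1 * z.2.1 * z.2.2).im * (1 + z.1 * z.2.1 * z.2.2).im) _ p :=
    (hre.mul hre).add (him.mul him)
  have hnq : Complex.normSq (1 + p.1 * p.2.1 * p.2.2) ≠ 0 := by
    simpa [Complex.normSq_eq_zero] using hp
  have hne : (1 + p.1 * p.2.1 * p.2.2).re * (1 + p.1 * p.2.1 * p.2.2).re
      + (1 + p.1 * p.2.1 * p.2.2).im * (1 + p.1 * p.2.1 * p.2.2).im ≠ 0 := by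
    rw [← Complex.normSq_apply]; exact hnq
  have h1 := ((Real.hasDerivAt_log hne).comp_hasFDerivAt p hns).const_mul (2:ℝ)⁻¹
  have hsq1 : HasFDerivAt (𝕜 := ℝ) (fun z : ℂ × ℂ × ℂ => z.1.re * z.1.re + z.1.im * z.1.im) _ p :=
    ((Complex.reCLM.hasFDerivAt.comp p hasFDerivAt_fst).mul
      (Complex.reCLM.hasFDerivAt.comp p hasFDerivAt_fst)).add
     ((Complex.imCLM.hasFDerivAt.comp p hasFDerivAt_fst).mul
      (Complex.imCLM.hasFDerivAt.comp p hasFDerivAt_fst))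
  have efst : HasFDerivAt (𝕜 := ℝ) (fun z : ℂ × ℂ × ℂ => z.2.1) _ p :=
    (hasFDerivAt_fst (p := p.2)).comp p hasFDerivAt_snd
  have esnd : HasFDerivAt (𝕜 := ℝ) (fun z : ℂ × ℂ × ℂ => z.2.2) _ p :=
    (hasFDerivAt_snd (p := p.2)).comp p hasFDerivAt_snd
  have hsq2 : HasFDerivAt (𝕜 := ℝ) (fun z : ℂ × ℂ × ℂ => z.2.1.re * z.2.1.re + z.2.1.im * z.2.1.im) _ p :=
    ((Complex.reCLM.hasFDerivAt.comp p efst).mul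
      (Complex.reCLM.hasFDerivAt.comp p efst)).add
     ((Complex.imCLM.hasFDerivAt.comp p efst).mul
      (Complex.imCLM.hasFDerivAt.comp p efst))
  have hsq3 : HasFDerivAt (𝕜 := ℝ) (fun z : ℂ × ℂ × ℂ => z.2.2.re * z.2.2.re + z.2.2.im * z.2.2.im) _ p :=
    ((Complex.reCLM.hasFDerivAt.comp p esnd).mul
      (Complex.reCLM.hasFDerivAt.comp p esnd)).add
     ((Complex.imCLM.hasFDerivAt.comp p esnd).mul
      (Complex.imCLM.hasFDerivAt.comp p esnd))
  have hd := HasFDerivAt.prodMk h1 (HasFDerivAt.prodMk (hsq1.sub hsq2) (hsq1.sub hsq3))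
  -- evaluation of the derivative
  have hL : ∀ u : ℂ × ℂ × ℂ, fderiv ℝ (fun z : ℂ × ℂ × ℂ =>
      ((2:ℝ)⁻¹ * Real.log ((1 + z.1 * z.2.1 * z.2.2).re * (1 + z.1 * z.2.1 * z.2.2).re
          + (1 + z.1 * z.2.1 * z.2.2).im * (1 + z.1 * z.2.1 * z.2.2).im),
       (z.1.re * z.1.re + z.1.im * z.1.im) - (z.2.1.re * z.2.1.re + z.2.1.im * z.2.1.im),
       (z.1.re * z.1.re + z.1.im * z.1.im) - (z.2.2.re * z.2.2.re + z.2.2.im * z.2.2.im))) p u =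
      ((Complex.normSq (1 + p.1 * p.2.1 * p.2.2))⁻¹ *
        ((starRingEnd ℂ) (1 + p.1 * p.2.1 * p.2.2) *
          (u.1 * p.2.1 * p.2.2 + p.1 * u.2.1 * p.2.2 + p.1 * p.2.1 * u.2.2)).re,
       2 * ((starRingEnd ℂ) p.1 * u.1).re - 2 * ((starRingEnd ℂ) p.2.1 * u.2.1).re,
       2 * ((starRingEnd ℂ) p.1 * u.1).re - 2 * ((starRingEnd ℂ) p.2.2 * u.2.2).re) := by
    intro u
    have hd' : HasFDerivAt (fun z : ℂ × ℂ × ℂ =>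
      ((2:ℝ)⁻¹ * Real.log ((1 + z.1 * z.2.1 * z.2.2).re * (1 + z.1 * z.2.1 * z.2.2).re
          + (1 + z.1 * z.2.1 * z.2.2).im * (1 + z.1 * z.2.1 * z.2.2).im),
       (z.1.re * z.1.re + z.1.im * z.1.im) - (z.2.1.re * z.2.1.re + z.2.1.im * z.2.1.im),
       (z.1.re * z.1.re + z.1.im * z.1.im) - (z.2.2.re * z.2.2.re + z.2.2.im * z.2.2.im))) _ p := hd
    rw [hd'.fderiv]
    simp [ContinuousLinearMap.comp_apply, Function.comp, Complex.normSq_apply]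
    refine ⟨by ring, by ring, by ring⟩
  clear hd hg hre him hns h1 hsq1 hsq2 hsq3 hne
  set L := fderiv ℝ (fun z : ℂ × ℂ × ℂ =>
      ((2:ℝ)⁻¹ * Real.log ((1 + z.1 * z.2.1 * z.2.2).re * (1 + z.1 * z.2.1 * z.2.2).re
          + (1 + z.1 * z.2.1 * z.2.2).im * (1 + z.1 * z.2.1 * z.2.2).im),
       (z.1.re * z.1.re + z.1.im * z.1.im) - (z.2.1.re * z.2.1.re + z.2.1.im * z.2.1.im),
       (z.1.re * z.1.re + z.1.im * z.1.im) - (z.2.2.re * z.2.2.re + z.2.2.im * z.2.2.im))) p with hLdef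
  set a := p.1 with ha
  set b := p.2.1 with hb
  set c := p.2.2 with hc
  set X1 : ℂ × ℂ × ℂ :=
    ((starRingEnd ℂ) (Complex.I * b * c * (starRingEnd ℂ) (1 + a * b * c)),
     (starRingEnd ℂ) (Complex.I * a * c * (starRingEnd ℂ) (1 + a * b * c)),
     (starRingEnd ℂ) (Complex.I * a * b * (starRingEnd ℂ) (1 + a * b * c))) with hX1
  set X2 : ℂ × ℂ × ℂ := (-(2 * Complex.I * a), 2 * Complex.I * b, 0) with hX2
  set X3 : ℂ × ℂ × ℂ := (-(2 * Complex.I * a), 0, 2 * Complex.I * c) with hX3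
  -- omega against the Hamiltonian vectors
  have hwX1 : ∀ v : ℂ × ℂ × ℂ, omega3 X1 v =
      ((starRingEnd ℂ) (1 + a * b * c) * (v.1 * b * c + a * v.2.1 * c + a * b * v.2.2)).re := by
    intro v
    simp [hX1, omega3_coord, Complex.mul_re, Complex.mul_im]
    ring
  have hwX2 : ∀ v : ℂ × ℂ × ℂ, omega3 X2 v =
      2 * ((starRingEnd ℂ) a * v.1).re - 2 * ((starRingEnd ℂ) b * v.2.1).re := by
    intro v
    simp [hX2, omega3_coord, Complex.mul_re, Complex.mul_im]
    ring
  have hwX3 : ∀ v : ℂ × ℂ × ℂ, omega3 X3 v =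
      2 * ((starRingEnd ℂ) a * v.1).re - 2 * ((starRingEnd ℂ) c * v.2.2).re := by
    intro v
    simp [hX3, omega3_coord, Complex.mul_re, Complex.mul_im]
    ring
  -- the Hamiltonian vectors lie in the kernel
  have hX1mem : X1 ∈ LinearMap.ker (L : (ℂ × ℂ × ℂ) →ₗ[ℝ] ℝ × ℝ × ℝ) := by
    rw [LinearMap.mem_ker, ContinuousLinearMap.coe_coe, hL]
    simp only [hX1, Prod.ext_iff, Prod.fst_zero, Prod.snd_zero]
    refine ⟨?_, ?_, ?_⟩ <;>
      · simp [Complex.mul_re, Complex.mul_im, Complex.normSq_apply]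
        try ring
        try tauto
  have hX2mem : X2 ∈ LinearMap.ker (L : (ℂ × ℂ × ℂ) →ₗ[ℝ] ℝ × ℝ × ℝ) := by
    rw [LinearMap.mem_ker, ContinuousLinearMap.coe_coe, hL]
    simp only [hX2, Prod.ext_iff, Prod.fst_zero, Prod.snd_zero]
    refine ⟨?_, ?_, ?_⟩ <;>
      · simp [Complex.mul_re, Complex.mul_im, Complex.normSq_apply]
        try ring
        try tauto
  have hX3mem : X3 ∈ LinearMap.ker (L : (ℂ × ℂ × ℂ) →ₗ[ℝ] ℝ × ℝ × ℝ) := by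
    rw [LinearMap.mem_ker, ContinuousLinearMap.coe_coe, hL]
    simp only [hX3, Prod.ext_iff, Prod.fst_zero, Prod.snd_zero]
    refine ⟨?_, ?_, ?_⟩ <;>
      · simp [Complex.mul_re, Complex.mul_im, Complex.normSq_apply]
        try ring
        try tauto
  -- omega of the Hamiltonian vectors with kernel vectors vanishes
  have hker_comp : ∀ v ∈ LinearMap.ker (L : (ℂ × ℂ × ℂ) →ₗ[ℝ] ℝ × ℝ × ℝ),
      ((starRingEnd ℂ) (1 + a * b * c) * (v.1 * b * c + a * v.2.1 * c + a * b * v.2.2)).re = 0 ∧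
      2 * ((starRingEnd ℂ) a * v.1).re - 2 * ((starRingEnd ℂ) b * v.2.1).re = 0 ∧
      2 * ((starRingEnd ℂ) a * v.1).re - 2 * ((starRingEnd ℂ) c * v.2.2).re = 0 := by
    intro v hv
    rw [LinearMap.mem_ker, ContinuousLinearMap.coe_coe, hL] at hv
    rw [Prod.ext_iff] at hv
    obtain ⟨h1, h23⟩ := hv
    rw [Prod.ext_iff] at h23
    obtain ⟨h2, h3⟩ := h23
    simp only [Prod.fst_zero, Prod.snd_zero] at h1 h2 h3
    refine ⟨?_, h2, h3⟩
    rcases mul_eq_zero.mp h1 with h | h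
    · exact absurd h (inv_ne_zero hnq)
    · exact h
  have hw1 : ∀ v ∈ LinearMap.ker (L : (ℂ × ℂ × ℂ) →ₗ[ℝ] ℝ × ℝ × ℝ), omega3 X1 v = 0 := by
    intro v hv
    rw [hwX1]
    exact (hker_comp v hv).1
  have hw2 : ∀ v ∈ LinearMap.ker (L : (ℂ × ℂ × ℂ) →ₗ[ℝ] ℝ × ℝ × ℝ), omega3 X2 v = 0 := by
    intro v hv
    rw [hwX2]
    exact (hker_comp v hv).2.1
  have hw3 : ∀ v ∈ LinearMap.ker (L : (ℂ × ℂ × ℂ) →ₗ[ℝ] ℝ × ℝ × ℝ), omega3 X3 v = 0 := by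
    intro v hv
    rw [hwX3]
    exact (hker_comp v hv).2.2
  -- the parametrization of the span of the Hamiltonian vectors
  let T : (ℝ × ℝ × ℝ) →ₗ[ℝ] ℂ × ℂ × ℂ :=
    { toFun := fun t => t.1 • X1 + t.2.1 • X2 + t.2.2 • X3
      map_add' := by
        intro x y
        simp only [Prod.fst_add, Prod.snd_add, add_smul]
        module
      map_smul' := by
        intro r x
        simp only [Prod.smul_fst, Prod.smul_snd, smul_eq_mul, RingHom.id_apply]
        module }
  have hTapp : ∀ t : ℝ × ℝ × ℝ, T t = t.1 • X1 + t.2.1 • X2 + t.2.2 • X3 := fun _ => rfl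
  have hTrange : LinearMap.range T ≤ LinearMap.ker (L : (ℂ × ℂ × ℂ) →ₗ[ℝ] ℝ × ℝ × ℝ) := by
    rintro u ⟨t, rfl⟩
    rw [hTapp]
    exact add_mem (add_mem (Submodule.smul_mem _ _ hX1mem) (Submodule.smul_mem _ _ hX2mem))
      (Submodule.smul_mem _ _ hX3mem)
  -- injectivity of T from surjectivity of L
  have hTinj : LinearMap.ker T = ⊥ := by
    rw [LinearMap.ker_eq_bot']
    intro t ht
    rw [hTapp] at ht
    obtain ⟨v, hvL⟩ := hsurj ((Complex.normSq (1 + a * b * c))⁻¹ * t.1, t.2.1, t.2.2)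
    have hEv := (hL v).symm.trans hvL
    rw [Prod.ext_iff] at hEv
    obtain ⟨h1, h23⟩ := hEv
    rw [Prod.ext_iff] at h23
    obtain ⟨h2, h3⟩ := h23
    dsimp only at h1 h2 h3
    have h1' : ((starRingEnd ℂ) (1 + a * b * c) *
        (v.1 * b * c + a * v.2.1 * c + a * b * v.2.2)).re = t.1 :=
      mul_left_cancel₀ (inv_ne_zero hnq) h1
    have hzero : (0:ℝ) = t.1 * t.1 + t.2.1 * t.2.1 + t.2.2 * t.2.2 := by
      calc (0:ℝ) = omega3 0 v := by simp [omega3_coord]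
        _ = omega3 (t.1 • X1 + t.2.1 • X2 + t.2.2 • X3) v := by rw [ht]
        _ = t.1 * omega3 X1 v + t.2.1 * omega3 X2 v + t.2.2 * omega3 X3 v := by
            rw [omega3_add_left, omega3_add_left, omega3_smul_left, omega3_smul_left,
              omega3_smul_left]
        _ = t.1 * t.1 + t.2.1 * t.2.1 + t.2.2 * t.2.2 := by
            rw [hwX1, hwX2, hwX3, h1', h2, h3]
    have ht1 : t.1 = 0 := by nlinarith [sq_nonneg t.1, sq_nonneg t.2.1, sq_nonneg t.2.2]
    have ht2 : t.2.1 = 0 := by nlinarith [sq_nonneg t.1, sq_nonneg t.2.1, sq_nonneg t.2.2]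
    have ht3 : t.2.2 = 0 := by nlinarith [sq_nonneg t.1, sq_nonneg t.2.1, sq_nonneg t.2.2]
    have : t = ((0:ℝ), (0:ℝ), (0:ℝ)) := by
      rw [Prod.ext_iff, Prod.ext_iff]
      exact ⟨ht1, ht2, ht3⟩
    exact this
  -- dimension count
  have hdim6 : Module.finrank ℝ (ℂ × ℂ × ℂ) = 6 := by
    simp [Module.finrank_prod, Complex.finrank_real_complex]
  have hdim3 : Module.finrank ℝ (ℝ × ℝ × ℝ) = 3 := by
    simp [Module.finrank_prod]
  have hker3 : Module.finrank ℝ (LinearMap.ker (L : (ℂ × ℂ × ℂ) →ₗ[ℝ] ℝ × ℝ × ℝ)) = 3 := by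
    have hrn := LinearMap.finrank_range_add_finrank_ker (L : (ℂ × ℂ × ℂ) →ₗ[ℝ] ℝ × ℝ × ℝ)
    have hrange : LinearMap.range (L : (ℂ × ℂ × ℂ) →ₗ[ℝ] ℝ × ℝ × ℝ) = ⊤ :=
      LinearMap.range_eq_top.mpr hsurj
    rw [hrange, finrank_top, hdim3, hdim6] at hrn
    have hkk : LinearMap.ker (L : (ℂ × ℂ × ℂ) →ₗ[ℝ] ℝ × ℝ × ℝ) = LinearMap.ker (L : (ℂ × ℂ × ℂ) →ₗ[ℝ] ℝ × ℝ × ℝ) := rfl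
    rw [hkk] at hrn
    omega
  have hrangeT : Module.finrank ℝ (LinearMap.range T) = 3 := by
    have h := LinearMap.finrank_range_add_finrank_ker T
    rw [hTinj, finrank_bot, hdim3] at h
    omega
  have hEq : LinearMap.range T = LinearMap.ker (L : (ℂ × ℂ × ℂ) →ₗ[ℝ] ℝ × ℝ × ℝ) :=
    Submodule.eq_of_le_of_finrank_eq hTrange (by rw [hrangeT, hker3])
  refine ⟨hker3, ?_⟩
  intro u hu v hv
  rw [← hEq] at hu
  obtain ⟨t, rfl⟩ := hu
  rw [hTapp, omega3_add_left, omega3_add_left, omega3_smul_left, omega3_smul_left,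
    omega3_smul_left, hw1 v hv, hw2 v hv, hw3 v hv]
  ring
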